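/- Let (T,R) be a balanced rooted tree with r = |R| ≥ 1 roots, a ≥ 1 unrooted vertices and b edges. Let n and p be positive integers, and let X, Y : R → Fin n be injective maps with disjoint images. For each j = 1, …, p let σ_j, τ_j : V(T) → Fin n be injective maps with σ_j restricted to R equal to X, τ_j restricted to R equal to Y, and σ_j(V(T)) ∩ τ_j(V(T)) = ∅. For an edge e = {u,v} of T write σ_j(e) = {σ_j u, σ_j v} and τ_j(e) = {τ_j u, τ_j v}, unordered pairs of distinct elements of Fin n. Call a set P of pairs of such unordered pairs determining if the equivalence relation generated by P relates σ_j(e) to τ_j(e) for every j ∈ {1,…,p} and every edge e of T. Let k be the minimum cardinality of a determining subset of {(σ_j(e), τ_j(e)) : 1 ≤ j ≤ p, e an edge of T}. Then 2·a·k ≥ b·(|⋃_{j=1}^{p} (σ_j(V(T)) ∪ τ_j(V(T)))| − 2r). -/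
import Mathlib

open Finset

/-- The rooted tree `(T,R)` is balanced: every nonempty set `S` of unrooted vertices
satisfies `e(S)/|S| ≥ b/a`, i.e. `b·|S| ≤ e(S)·a`. -/
def IsBalanced {V : Type*} [Fintype V] [DecidableEq V] (T : SimpleGraph V)
    [DecidableRel T.Adj] (R : Finset V) : Prop :=
  ∀ S : Finset V, S.Nonempty → (∀ v ∈ S, v ∉ R) →
    T.edgeFinset.card * S.card ≤
      (T.edgeFinset.filter (fun e => ∃ v ∈ S, v ∈ e)).card * (Fintype.card V - R.card)

lemma eqvgen_field {α : Type*} {rel : α → α → Prop} {x y : α}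
    (h : Relation.EqvGen rel x y) :
    x = y ∨ ((∃ z, rel x z ∨ rel z x) ∧ (∃ z, rel y z ∨ rel z y)) := by
  induction h with
  | rel a b hab => exact Or.inr ⟨⟨b, Or.inl hab⟩, ⟨a, Or.inr hab⟩⟩
  | refl a => exact Or.inl rfl
  | symm a b _ ih =>
      rcases ih with h | ⟨h1, h2⟩
      · exact Or.inl h.symm
      · exact Or.inr ⟨h2, h1⟩
  | trans a b c _ _ ih1 ih2 =>
      rcases ih1 with rfl | ⟨h1, h2⟩
      · exact ih2
      · rcases ih2 with rfl | ⟨h3, h4⟩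
        · exact Or.inr ⟨h1, h2⟩
        · exact Or.inr ⟨h1, h4⟩

/-- the constraint-number inequality `2·a·k ≥ b·(v(H₁ ∪ H₂) − 2r)` for a
pair of unions of `p` labelled copies of a balanced rooted tree `(T,R)` rooted at the
pair `(X,Y)`, where `k` is the least size of a determining set of edge pairs. -/
theorem statement9 {V : Type} [Fintype V] [DecidableEq V]
    (T : SimpleGraph V) [DecidableRel T.Adj] (R : Finset V)
    (hTree : T.IsTree) (hInd : ∀ u ∈ R, ∀ v ∈ R, ¬ T.Adj u v)
    (r a b : ℕ)
    (hr : r = R.card) (ha : a = Fintype.card V - R.card) (hb : b = T.edgeFinset.card)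
    (hr1 : 1 ≤ r) (ha1 : 1 ≤ a) (hBal : IsBalanced T R)
    (n p : ℕ) (hn : 0 < n) (hp : 0 < p)
    (X Y : V → Fin n)
    (hXinj : Set.InjOn X R) (hYinj : Set.InjOn Y R)
    (hXY : Disjoint (R.image X) (R.image Y))
    (σ τ : Fin p → V → Fin n)
    (hσinj : ∀ j, Function.Injective (σ j)) (hτinj : ∀ j, Function.Injective (τ j))
    (hσR : ∀ j, ∀ v ∈ R, σ j v = X v) (hτR : ∀ j, ∀ v ∈ R, τ j v = Y v)
    (hdisj : ∀ j, Disjoint (Set.range (σ j)) (Set.range (τ j)))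
    (k : ℕ)
    (hk : k = sInf {k' : ℕ | ∃ P : Finset (Sym2 (Fin n) × Sym2 (Fin n)),
      P ⊆ (Finset.univ ×ˢ T.edgeFinset).image
          (fun je : Fin p × Sym2 V => (Sym2.map (σ je.1) je.2, Sym2.map (τ je.1) je.2)) ∧
      (∀ j : Fin p, ∀ e ∈ T.edgeFinset,
        Relation.EqvGen (fun x y => (x, y) ∈ P) (Sym2.map (σ j) e) (Sym2.map (τ j) e)) ∧
      P.card = k'}) :
    b * ((Finset.univ.biUnion (fun j : Fin p =>
        Finset.image (σ j) Finset.univ ∪ Finset.image (τ j) Finset.univ)).card - 2 * r)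
      ≤ 2 * a * k := by
  classical
  -- obtain a minimal determining set P with card k
  set Sset : Set ℕ := {k' : ℕ | ∃ P : Finset (Sym2 (Fin n) × Sym2 (Fin n)),
      P ⊆ (Finset.univ ×ˢ T.edgeFinset).image
          (fun je : Fin p × Sym2 V => (Sym2.map (σ je.1) je.2, Sym2.map (τ je.1) je.2)) ∧
      (∀ j : Fin p, ∀ e ∈ T.edgeFinset,
        Relation.EqvGen (fun x y => (x, y) ∈ P) (Sym2.map (σ j) e) (Sym2.map (τ j) e)) ∧
      P.card = k'} with hSset
  have hne : Sset.Nonempty := by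
    refine ⟨_, (Finset.univ ×ˢ T.edgeFinset).image
          (fun je : Fin p × Sym2 V => (Sym2.map (σ je.1) je.2, Sym2.map (τ je.1) je.2)),
      Finset.Subset.refl _, ?_, rfl⟩
    intro j e he
    exact Relation.EqvGen.rel _ _ (Finset.mem_image.mpr
      ⟨(j, e), Finset.mem_product.mpr ⟨Finset.mem_univ _, he⟩, rfl⟩)
  have hkmem : k ∈ Sset := hk ▸ Nat.sInf_mem hne
  obtain ⟨P, hPsub, hPdet, hPcard⟩ := hkmem
  -- the set of edge images appearing as endpoints of P
  set Estar : Finset (Sym2 (Fin n)) := P.image Prod.fst ∪ P.image Prod.snd with hEstar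
  have hEstarcard : Estar.card ≤ 2 * k := by
    calc Estar.card ≤ (P.image Prod.fst).card + (P.image Prod.snd).card :=
          Finset.card_union_le _ _
      _ ≤ P.card + P.card := add_le_add (Finset.card_image_le) (Finset.card_image_le)
      _ = 2 * k := by rw [hPcard]; ring
  -- every edge image is in Estar
  have hneq : ∀ (j : Fin p) (e : Sym2 V), Sym2.map (σ j) e ≠ Sym2.map (τ j) e := by
    intro j e
    induction e using Sym2.ind with
    | _ u v =>
      intro h
      have h1 : σ j u ∈ Sym2.map (σ j) s(u, v) := by
        rw [Sym2.map_pair_eq]; exact Sym2.mem_mk_left _ _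
      rw [h] at h1
      obtain ⟨w, _, hw⟩ := Sym2.mem_map.mp h1
      exact Set.disjoint_left.mp (hdisj j) ⟨u, rfl⟩ ⟨w, hw⟩
  have hmemE : ∀ (j : Fin p), ∀ e ∈ T.edgeFinset,
      Sym2.map (σ j) e ∈ Estar ∧ Sym2.map (τ j) e ∈ Estar := by
    intro j e he
    rcases eqvgen_field (hPdet j e he) with heq | ⟨⟨z1, h1⟩, ⟨z2, h2⟩⟩
    · exact absurd heq (hneq j e)
    constructor
    · rcases h1 with h1 | h1
      · exact Finset.mem_union_left _ (Finset.mem_image.mpr ⟨_, h1, rfl⟩)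
      · exact Finset.mem_union_right _ (Finset.mem_image.mpr ⟨_, h1, rfl⟩)
    · rcases h2 with h2 | h2
      · exact Finset.mem_union_left _ (Finset.mem_image.mpr ⟨_, h2, rfl⟩)
      · exact Finset.mem_union_right _ (Finset.mem_image.mpr ⟨_, h2, rfl⟩)
  -- set up the family of 2p injections
  set roots : Finset (Fin n) := R.image X ∪ R.image Y with hroots
  have hrootscard : roots.card = 2 * r := by
    rw [hroots, Finset.card_union_of_disjoint hXY, Finset.card_image_of_injOn hXinj,
      Finset.card_image_of_injOn hYinj, ← hr]; ring
  set φ : Fin p × Bool → V → Fin n := fun i => if i.2 then τ i.1 else σ i.1 with hφ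
  have hφinj : ∀ i, Function.Injective (φ i) := by
    rintro ⟨j, b⟩; cases b <;> simp [hφ, hσinj j, hτinj j]
  have hφroot : ∀ i, ∀ v ∈ R, φ i v ∈ roots := by
    rintro ⟨j, bb⟩ v hv
    cases bb
    · exact Finset.mem_union_left _ (Finset.mem_image.mpr ⟨v, hv, (hσR j v hv).symm⟩)
    · exact Finset.mem_union_right _ (Finset.mem_image.mpr ⟨v, hv, (hτR j v hv).symm⟩)
  have hφE : ∀ i, ∀ e ∈ T.edgeFinset, Sym2.map (φ i) e ∈ Estar := by
    rintro ⟨j, bb⟩ e he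
    cases bb
    · exact (hmemE j e he).1
    · exact (hmemE j e he).2
  set Wv : Finset (Fin p × Bool) → Finset (Fin n) :=
    fun F => roots ∪ F.biUnion (fun i => Finset.univ.image (φ i)) with hWv
  -- the key induction
  have key : ∀ F : Finset (Fin p × Bool), ∃ EF : Finset (Sym2 (Fin n)),
      (∀ q ∈ EF, ∃ i ∈ F, ∃ e ∈ T.edgeFinset, q = Sym2.map (φ i) e) ∧
      (∀ q ∈ EF, ∀ w ∈ q, w ∈ Wv F) ∧
      b * ((Wv F).card - 2 * r) ≤ a * EF.card := by
    intro F
    induction F using Finset.induction_on with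
    | empty =>
      refine ⟨∅, by simp, by simp, ?_⟩
      have : Wv ∅ = roots := by simp [hWv]
      rw [this, hrootscard]
      simp
    | @insert i F' hiF' ih =>
      obtain ⟨EF', hsrc', hvert', hcard'⟩ := ih
      set S : Finset V := Finset.univ.filter (fun v => φ i v ∉ Wv F') with hS
      have hSmem : ∀ v, v ∈ S ↔ φ i v ∉ Wv F' := by intro v; simp [hS]
      have hrootsub : roots ⊆ Wv F' := Finset.subset_union_left
      -- balancedness bound (trivial if S is empty)
      have hbal : b * S.card ≤
          (T.edgeFinset.filter (fun e => ∃ v ∈ S, v ∈ e)).card * a := by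
        rcases S.eq_empty_or_nonempty with hSe | hSne
        · simp [hSe]
        · rw [hb, ha]
          exact hBal S hSne (fun v hv hvR =>
            (hSmem v).mp hv (hrootsub (hφroot i v hvR)))
      -- the new vertex set
      have hWeq : Wv (insert i F') = Wv F' ∪ S.image (φ i) := by
        apply Finset.Subset.antisymm
        · intro x hx
          simp only [hWv, Finset.biUnion_insert, Finset.mem_union, Finset.mem_image,
            Finset.mem_univ, true_and] at hx
          rcases hx with hx | ⟨v, rfl⟩ | hx
          · exact Finset.mem_union_left _ (Finset.mem_union_left _ hx)
          · by_cases hv : φ i v ∈ Wv F'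
            · exact Finset.mem_union_left _ hv
            · exact Finset.mem_union_right _
                (Finset.mem_image.mpr ⟨v, (hSmem v).mpr hv, rfl⟩)
          · exact Finset.mem_union_left _ (Finset.mem_union_right _ hx)
        · intro x hx
          rcases Finset.mem_union.mp hx with hx | hx
          · simp only [hWv, Finset.biUnion_insert, Finset.mem_union] at hx ⊢
            tauto
          · obtain ⟨v, _, rfl⟩ := Finset.mem_image.mp hx
            simp only [hWv, Finset.biUnion_insert, Finset.mem_union, Finset.mem_image,
              Finset.mem_univ, true_and]
            exact Or.inr (Or.inl ⟨v, rfl⟩)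
      have hWdisj : Disjoint (Wv F') (S.image (φ i)) := by
        rw [Finset.disjoint_right]
        intro x hx
        obtain ⟨v, hv, rfl⟩ := Finset.mem_image.mp hx
        exact (hSmem v).mp hv
      have hWcard : (Wv (insert i F')).card = (Wv F').card + S.card := by
        rw [hWeq, Finset.card_union_of_disjoint hWdisj,
          Finset.card_image_of_injective _ (hφinj i)]
      have hWmono : Wv F' ⊆ Wv (insert i F') := hWeq ▸ Finset.subset_union_left
      -- the new edges
      set C : Finset (Sym2 (Fin n)) :=
        (T.edgeFinset.filter (fun e => ∃ v ∈ S, v ∈ e)).image (Sym2.map (φ i)) with hC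
      have hCcard : C.card = (T.edgeFinset.filter (fun e => ∃ v ∈ S, v ∈ e)).card :=
        Finset.card_image_of_injective _ (Sym2.map.injective (hφinj i))
      have hCdisj : Disjoint EF' C := by
        rw [Finset.disjoint_right]
        intro q hq hq'
        obtain ⟨e, hef, rfl⟩ := Finset.mem_image.mp hq
        obtain ⟨-, v, hvS, hve⟩ := Finset.mem_filter.mp hef
        exact (hSmem v).mp hvS (hvert' _ hq' (φ i v) (Sym2.mem_map.mpr ⟨v, hve, rfl⟩))
      refine ⟨EF' ∪ C, ?_, ?_, ?_⟩
      · intro q hq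
        rcases Finset.mem_union.mp hq with hq | hq
        · obtain ⟨i', hi', e, he, hqe⟩ := hsrc' q hq
          exact ⟨i', Finset.mem_insert_of_mem hi', e, he, hqe⟩
        · obtain ⟨e, hef, rfl⟩ := Finset.mem_image.mp hq
          exact ⟨i, Finset.mem_insert_self _ _, e, (Finset.mem_filter.mp hef).1, rfl⟩
      · intro q hq w hw
        rcases Finset.mem_union.mp hq with hq | hq
        · exact hWmono (hvert' q hq w hw)
        · obtain ⟨e, hef, rfl⟩ := Finset.mem_image.mp hq
          obtain ⟨v, hve, rfl⟩ := Sym2.mem_map.mp hw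
          by_cases hv : φ i v ∈ Wv F'
          · exact hWmono hv
          · rw [hWeq]
            exact Finset.mem_union_right _
              (Finset.mem_image.mpr ⟨v, (hSmem v).mpr hv, rfl⟩)
      · rw [hWcard, Finset.card_union_of_disjoint hCdisj, hCcard]
        calc b * ((Wv F').card + S.card - 2 * r)
            ≤ b * (((Wv F').card - 2 * r) + S.card) :=
              Nat.mul_le_mul_left _ (by omega)
          _ = b * ((Wv F').card - 2 * r) + b * S.card := by ring
          _ ≤ a * EF'.card +
              (T.edgeFinset.filter (fun e => ∃ v ∈ S, v ∈ e)).card * a :=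
              add_le_add hcard' hbal
          _ = a * (EF'.card + (T.edgeFinset.filter (fun e => ∃ v ∈ S, v ∈ e)).card) := by
              ring
  -- assemble
  obtain ⟨EF, hsrc, -, hcard⟩ := key Finset.univ
  have hWuniv : Wv Finset.univ = Finset.univ.biUnion (fun j : Fin p =>
      Finset.image (σ j) Finset.univ ∪ Finset.image (τ j) Finset.univ) := by
    apply Finset.Subset.antisymm
    · intro x hx
      rcases Finset.mem_union.mp hx with hx | hx
      · rcases Finset.mem_union.mp hx with hx | hx
        · obtain ⟨v, hv, rfl⟩ := Finset.mem_image.mp hx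
          refine Finset.mem_biUnion.mpr ⟨⟨0, hp⟩, Finset.mem_univ _, ?_⟩
          exact Finset.mem_union_left _ (Finset.mem_image.mpr
            ⟨v, Finset.mem_univ v, hσR ⟨0, hp⟩ v hv⟩)
        · obtain ⟨v, hv, rfl⟩ := Finset.mem_image.mp hx
          refine Finset.mem_biUnion.mpr ⟨⟨0, hp⟩, Finset.mem_univ _, ?_⟩
          exact Finset.mem_union_right _ (Finset.mem_image.mpr
            ⟨v, Finset.mem_univ v, hτR ⟨0, hp⟩ v hv⟩)
      · obtain ⟨⟨j, bb⟩, -, hx⟩ := Finset.mem_biUnion.mp hx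
        refine Finset.mem_biUnion.mpr ⟨j, Finset.mem_univ _, ?_⟩
        cases bb
        · exact Finset.mem_union_left _ hx
        · exact Finset.mem_union_right _ hx
    · intro x hx
      obtain ⟨j, -, hx⟩ := Finset.mem_biUnion.mp hx
      apply Finset.mem_union_right
      rcases Finset.mem_union.mp hx with hx | hx
      · exact Finset.mem_biUnion.mpr ⟨(j, false), Finset.mem_univ _, hx⟩
      · exact Finset.mem_biUnion.mpr ⟨(j, true), Finset.mem_univ _, hx⟩
  have hEFsub : EF ⊆ Estar := by
    intro q hq
    obtain ⟨i, -, e, he, rfl⟩ := hsrc q hq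
    exact hφE i e he
  calc b * ((Finset.univ.biUnion (fun j : Fin p =>
        Finset.image (σ j) Finset.univ ∪ Finset.image (τ j) Finset.univ)).card - 2 * r)
      = b * ((Wv Finset.univ).card - 2 * r) := by rw [hWuniv]
    _ ≤ a * EF.card := hcard
    _ ≤ a * Estar.card := Nat.mul_le_mul_left _ (Finset.card_le_card hEFsub)
    _ ≤ a * (2 * k) := Nat.mul_le_mul_left _ hEstarcard
    _ = 2 * a * k := by ring
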